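/- There is a constant C > 0 such that for every n ≥ 2 and every finite set A with |A| = 2, there exists a complete n-universal transformation f̂ : A^{2n+3} → A^{2n+3} of size 2n+3 whose maximal sequential time satisfies st^max_{f̂} ≤ 3n·2^{n·2^n + n} + C·2^{n·2^n + n}. -/

import Mathlib

/-- The instruction of `A^m` induced by the `i`-th coordinate function of `f`. -/
def instr {A : Type*} {m : ℕ} (f : (Fin m → A) → Fin m → A) (i : Fin m) :
    (Fin m → A) → Fin m → A :=
  fun x => Function.update x i (f x i)

/-- Apply a list of induced instructions of `f`, first element of the list first. -/
def applyInstrs {A : Type*} {m : ℕ} (f : (Fin m → A) → Fin m → A) :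
    List (Fin m) → (Fin m → A) → Fin m → A
  | [], x => x
  | i :: l, x => applyInstrs f l (instr f i x)

/-- Projection of `A^m` onto the first `n` coordinates. -/
def pr {A : Type*} {m n : ℕ} (hmn : n ≤ m) (x : Fin m → A) : Fin n → A :=
  fun i => x (Fin.castLE hmn i)

/-- `hs` witnesses that `f` sequentially simulates the sequence `gs`: the `k`-th
element of `hs` is a nonempty list of instruction indices expressing `h^(k) ∈ S_f`,
and for each `i` the composition `h^(1) ∘ ⋯ ∘ h^(i)` simulates `g^(i)`. -/
def SeqWitness {A : Type*} {m n : ℕ} (hmn : n ≤ m)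
    (f : (Fin m → A) → Fin m → A)
    (gs : List ((Fin n → A) → Fin n → A))
    (hs : List (List (Fin m))) : Prop :=
  hs.length = gs.length ∧ (∀ l ∈ hs, l ≠ []) ∧
    ∀ (i : ℕ) (hi : i < gs.length) (x : Fin m → A),
      gs.get ⟨i, hi⟩ (pr hmn x) = pr hmn (applyInstrs f ((hs.take (i + 1)).flatten) x)

set_option linter.unreachableTactic false
set_option linter.unusedTactic false
set_option maxHeartbeats 1000000
namespace BU

variable {n : ℕ}

def oi (j : Fin n) : Fin (2*n+3) := ⟨j.1, by have := j.isLt; omega⟩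
def ci (k : Fin n) : Fin (2*n+3) := ⟨n + k.1, by have := k.isLt; omega⟩
def si : Fin (2*n+3) := ⟨2*n, by omega⟩
def mi : Fin (2*n+3) := ⟨2*n+1, by omega⟩
def zi : Fin (2*n+3) := ⟨2*n+2, by omega⟩

def mkState (o c : Fin n → Bool) (s mm z : Bool) : Fin (2*n+3) → Bool :=
  fun i => if h : (i:ℕ) < n then o ⟨i.1, h⟩
    else if h2 : (i:ℕ) < n + n then c ⟨i.1 - n, by omega⟩
    else if (i:ℕ) = 2*n then s
    else if (i:ℕ) = 2*n+1 then mm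
    else z

def fB (n : ℕ) : (Fin (2*n+3) → Bool) → Fin (2*n+3) → Bool := fun x i =>
  if h : (i:ℕ) < n then (if (∀ k : Fin n, x (ci k) = false) then x si else x i)
  else if h2 : (i:ℕ) < n + n then (if x si then !(x i) else x (oi ⟨i.1 - n, by omega⟩))
  else if (i:ℕ) = 2*n then (if x mi then false else !(x i))
  else if (i:ℕ) = 2*n+1 then x si
  else x i

variable {o c : Fin n → Bool} {s mm z : Bool}

@[simp] lemma mkState_oi (j : Fin n) : mkState o c s mm z (oi j) = o j := by
  simp [mkState, oi, j.isLt]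

@[simp] lemma mkState_ci (k : Fin n) : mkState o c s mm z (ci k) = c k := by
  have hk := k.isLt
  unfold mkState ci
  rw [dif_neg (by first | (simp; omega) | simp | omega), dif_pos (by first | (simp; omega) | simp | omega)]
  congr 1
  ext
  simp

@[simp] lemma mkState_si : mkState o c s mm z si = s := by
  unfold mkState si
  rw [dif_neg (by first | (simp; omega) | simp | omega), dif_neg (by first | (simp; omega) | simp | omega), if_pos rfl]

@[simp] lemma mkState_mi : mkState o c s mm z mi = mm := by
  unfold mkState mi
  rw [dif_neg (by first | (simp; omega) | simp | omega), dif_neg (by first | (simp; omega) | simp | omega), if_neg (by simp), if_pos rfl]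

@[simp] lemma mkState_zi : mkState o c s mm z zi = z := by
  unfold mkState zi
  rw [dif_neg (by first | (simp; omega) | simp | omega), dif_neg (by first | (simp; omega) | simp | omega), if_neg (by simp), if_neg (by simp)]

lemma state_eq_mkState (x : Fin (2*n+3) → Bool) :
    x = mkState (fun j => x (oi j)) (fun k => x (ci k)) (x si) (x mi) (x zi) := by
  funext i
  unfold mkState
  by_cases h1 : (i:ℕ) < n
  · rw [dif_pos h1]; first | (congr 1; ext; simp [oi]; omega) | (congr 1; ext; simp [oi]) | (congr 1; ext) | congr 1
  · rw [dif_neg h1]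
    by_cases h2 : (i:ℕ) < n + n
    · rw [dif_pos h2]; first | (congr 1; ext; simp [ci]; omega) | (congr 1; ext; simp [ci]) | (congr 1; ext) | congr 1
    · rw [dif_neg h2]
      have h3 := i.isLt
      by_cases h4 : (i:ℕ) = 2*n
      · rw [if_pos h4]; first | (congr 1; ext; simp [si]; omega) | (congr 1; ext; simp [si]) | (congr 1; ext) | congr 1
      · rw [if_neg h4]
        by_cases h5 : (i:ℕ) = 2*n+1
        · rw [if_pos h5]; first | (congr 1; ext; simp [mi]; omega) | (congr 1; ext; simp [mi]) | (congr 1; ext) | congr 1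
        · rw [if_neg h5]; first | (congr 1; ext; simp [zi]; omega) | (congr 1; ext; simp [zi]) | (congr 1; ext) | congr 1


lemma fin_ne_of_val_ne {m : ℕ} {a b : Fin m} (h : (a:ℕ) ≠ (b:ℕ)) : a ≠ b :=
  fun he => h (congrArg Fin.val he)

@[simp] lemma update_oi (o c : Fin n → Bool) (s mm z : Bool) (j : Fin n) (b : Bool) :
    Function.update (mkState o c s mm z) (oi j) b = mkState (Function.update o j b) c s mm z := by
  funext i
  rw [Function.update_apply]
  by_cases hij : i = oi j
  · subst hij; simp
  · rw [if_neg hij]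
    unfold mkState
    by_cases h1 : (i:ℕ) < n
    · rw [dif_pos h1, dif_pos h1, Function.update_apply, if_neg]
      intro he
      exact hij (by ext; simpa [oi] using congrArg Fin.val he)
    · rw [dif_neg h1, dif_neg h1]

@[simp] lemma update_ci (o c : Fin n → Bool) (s mm z : Bool) (k : Fin n) (b : Bool) :
    Function.update (mkState o c s mm z) (ci k) b = mkState o (Function.update c k b) s mm z := by
  funext i
  rw [Function.update_apply]
  by_cases hik : i = ci k
  · subst hik; simp
  · rw [if_neg hik]
    unfold mkState
    by_cases h1 : (i:ℕ) < n
    · rw [dif_pos h1, dif_pos h1]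
    · rw [dif_neg h1, dif_neg h1]
      by_cases h2 : (i:ℕ) < n + n
      · rw [dif_pos h2, dif_pos h2, Function.update_apply, if_neg]
        intro he
        have hv : (i:ℕ) - n = (k:ℕ) := by simpa using congrArg Fin.val he
        exact hik (by ext; simp [ci]; omega)
      · rw [dif_neg h2, dif_neg h2]

@[simp] lemma update_si (o c : Fin n → Bool) (s mm z : Bool) (b : Bool) :
    Function.update (mkState o c s mm z) si b = mkState o c b mm z := by
  funext i
  rw [Function.update_apply]
  by_cases his : i = si
  · subst his; simp
  · rw [if_neg his]
    have hv : (i:ℕ) ≠ 2*n := fun h => his (by ext; simpa [si] using h)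
    unfold mkState
    by_cases h1 : (i:ℕ) < n
    · rw [dif_pos h1, dif_pos h1]
    · rw [dif_neg h1, dif_neg h1]
      by_cases h2 : (i:ℕ) < n + n
      · rw [dif_pos h2, dif_pos h2]
      · rw [dif_neg h2, dif_neg h2, if_neg hv, if_neg hv]

@[simp] lemma update_mi (o c : Fin n → Bool) (s mm z : Bool) (b : Bool) :
    Function.update (mkState o c s mm z) mi b = mkState o c s b z := by
  funext i
  rw [Function.update_apply]
  by_cases him : i = mi
  · subst him; simp
  · rw [if_neg him]
    have hv : (i:ℕ) ≠ 2*n+1 := fun h => him (by ext; simpa [mi] using h)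
    unfold mkState
    by_cases h1 : (i:ℕ) < n
    · rw [dif_pos h1, dif_pos h1]
    · rw [dif_neg h1, dif_neg h1]
      by_cases h2 : (i:ℕ) < n + n
      · rw [dif_pos h2, dif_pos h2]
      · rw [dif_neg h2, dif_neg h2]
        by_cases h3 : (i:ℕ) = 2*n
        · rw [if_pos h3, if_pos h3]
        · rw [if_neg h3, if_neg h3, if_neg hv, if_neg hv]

-- values of fB at each index on a described state
lemma fB_oi (x : Fin (2*n+3) → Bool) (j : Fin n) :
    fB n x (oi j) = if (∀ k : Fin n, x (ci k) = false) then x si else x (oi j) := by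
  unfold fB
  rw [dif_pos (by simpa [oi] using j.isLt)]

lemma fB_ci (x : Fin (2*n+3) → Bool) (k : Fin n) :
    fB n x (ci k) = if x si then !(x (ci k)) else x (oi k) := by
  have hk := k.isLt
  unfold fB
  rw [dif_neg (by first | (simp [ci]; omega) | simp [ci] | omega),
    dif_pos (by first | (simp [ci]; omega) | simp [ci] | omega)]
  first
  | (congr 2; ext; simp [oi, ci]; omega)
  | (congr 2; ext; simp [oi, ci])
  | (congr 2; ext)
  | congr 2
  | rfl

lemma fB_si (x : Fin (2*n+3) → Bool) :
    fB n x si = if x mi then false else !(x si) := by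
  unfold fB
  rw [dif_neg (by first | (simp [si]; omega) | simp [si] | omega), dif_neg (by first | (simp [si]; omega) | simp [si] | omega), if_pos (by simp [si])]

lemma fB_mi (x : Fin (2*n+3) → Bool) : fB n x mi = x si := by
  unfold fB
  rw [dif_neg (by first | (simp [mi]; omega) | simp [mi] | omega), dif_neg (by first | (simp [mi]; omega) | simp [mi] | omega),
    if_neg (by simp [mi]), if_pos (by simp [mi])]

@[simp] lemma instr_oi (o c : Fin n → Bool) (s mm z : Bool) (j : Fin n) :
    instr (fB n) (oi j) (mkState o c s mm z)
      = mkState (Function.update o j (if (∀ k : Fin n, c k = false) then s else o j)) c s mm z := by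
  unfold instr
  rw [fB_oi]
  simp only [mkState_ci, mkState_si, mkState_oi]
  rw [update_oi]

@[simp] lemma instr_ci (o c : Fin n → Bool) (s mm z : Bool) (k : Fin n) :
    instr (fB n) (ci k) (mkState o c s mm z)
      = mkState o (Function.update c k (if s then !(c k) else o k)) s mm z := by
  unfold instr
  rw [fB_ci]
  simp only [mkState_ci, mkState_si, mkState_oi]
  rw [update_ci]

@[simp] lemma instr_si (o c : Fin n → Bool) (s mm z : Bool) :
    instr (fB n) si (mkState o c s mm z)
      = mkState o c (if mm then false else !s) mm z := by
  unfold instr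
  rw [fB_si]
  simp only [mkState_si, mkState_mi]
  rw [update_si]

@[simp] lemma instr_mi (o c : Fin n → Bool) (s mm z : Bool) :
    instr (fB n) mi (mkState o c s mm z) = mkState o c s s z := by
  unfold instr
  rw [fB_mi]
  simp only [mkState_si]
  rw [update_mi]

lemma applyInstrs_append {A : Type*} {m : ℕ} (f : (Fin m → A) → Fin m → A)
    (l₁ l₂ : List (Fin m)) (x : Fin m → A) :
    applyInstrs f (l₁ ++ l₂) x = applyInstrs f l₂ (applyInstrs f l₁ x) := by
  induction l₁ generalizing x with
  | nil => rfl
  | cons i l ih => simp [applyInstrs, ih]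


/-! ### Programs -/

def normProg : List (Fin (2*n+3)) := [mi, si, si, mi]

lemma norm_apply (o c : Fin n → Bool) (s mm z : Bool) :
    applyInstrs (fB n) normProg (mkState o c s mm z) = mkState o c false false z := by
  simp only [normProg, applyInstrs, instr_mi, instr_si]
  cases s <;> cases mm <;> rfl

lemma copy_apply (ks : List (Fin n)) :
    ∀ (o c : Fin n → Bool) (mm z : Bool),
    applyInstrs (fB n) (ks.map ci) (mkState o c false mm z)
      = mkState o (fun k => if k ∈ ks then o k else c k) false mm z := by
  induction ks with
  | nil =>
    intro o c mm z
    have h : (fun k => if k ∈ ([] : List (Fin n)) then o k else c k) = c := by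
      funext k; simp
    simp [applyInstrs, h]
  | cons k ks ih =>
    intro o c mm z
    simp only [List.map_cons, applyInstrs, instr_ci]
    rw [show (if (false : Bool) then !(c k) else o k) = o k by simp]
    rw [ih]
    have h : (fun k' => if k' ∈ ks then o k' else Function.update c k (o k) k')
        = fun k' => if k' ∈ k :: ks then o k' else c k' := by
      funext k'
      by_cases h1 : k' = k
      · subst h1
        by_cases h2 : k' ∈ ks <;> simp [h2]
      · rw [Function.update_of_ne h1]
        by_cases h2 : k' ∈ ks <;> simp [h1, h2]
    rw [h]

lemma toggle_apply (ks : List (Fin n)) (hnd : ks.Nodup) :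
    ∀ (o c : Fin n → Bool) (mm z : Bool),
    applyInstrs (fB n) (ks.map ci) (mkState o c true mm z)
      = mkState o (fun k => if k ∈ ks then !(c k) else c k) true mm z := by
  induction ks with
  | nil =>
    intro o c mm z
    have h : (fun k => if k ∈ ([] : List (Fin n)) then !(c k) else c k) = c := by
      funext k; simp
    simp [applyInstrs, h]
  | cons k ks ih =>
    intro o c mm z
    have hk : k ∉ ks := (List.nodup_cons.1 hnd).1
    simp only [List.map_cons, applyInstrs, instr_ci, if_true]
    rw [ih (List.nodup_cons.1 hnd).2]
    have h : (fun k' => if k' ∈ ks then !(Function.update c k (!(c k)) k')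
          else Function.update c k (!(c k)) k')
        = fun k' => if k' ∈ k :: ks then !(c k') else c k' := by
      funext k'
      by_cases h1 : k' = k
      · subst h1
        simp [hk]
      · rw [Function.update_of_ne h1]
        by_cases h2 : k' ∈ ks <;> simp [h1, h2]
    rw [h]

def wAux (w : Fin n → Bool) : List (Fin n) → Bool → List (Fin (2*n+3))
  | [], s => if s then [si] else []
  | j :: js, s => (if s = w j then ([] : List (Fin (2*n+3))) else [si]) ++ (oi j :: wAux w js (w j))

lemma wAux_apply (w : Fin n → Bool) (js : List (Fin n)) :
    ∀ (s : Bool) (o c : Fin n → Bool) (z : Bool),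
    applyInstrs (fB n) (wAux w js s) (mkState o c s false z)
      = mkState (fun j => if j ∈ js ∧ (∀ k, c k = false) then w j else o j) c false false z := by
  induction js with
  | nil =>
    intro s o c z
    have h : (fun j => if j ∈ ([] : List (Fin n)) ∧ (∀ k, c k = false) then w j else o j) = o := by
      funext j; simp
    cases s <;> simp [wAux, applyInstrs, h]
  | cons j js ih =>
    intro s o c z
    have key : ∀ (o : Fin n → Bool),
        applyInstrs (fB n) (oi j :: wAux w js (w j)) (mkState o c (w j) false z)
        = mkState (fun j' => if j' ∈ j :: js ∧ (∀ k, c k = false) then w j' else o j') c false false z := by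
      intro o
      simp only [applyInstrs, instr_oi]
      rw [ih]
      have harg : (fun j' => if j' ∈ js ∧ (∀ k, c k = false) then w j'
            else Function.update o j (if (∀ k, c k = false) then w j else o j) j')
          = fun j' => if j' ∈ j :: js ∧ (∀ k, c k = false) then w j' else o j' := by
        funext j'
        by_cases h1 : j' = j
        · subst h1
          by_cases hc : (∀ k, c k = false)
          · by_cases h2 : j' ∈ js <;> simp [h2, hc]
          · by_cases h2 : j' ∈ js <;> simp [h2, hc]
        · rw [Function.update_apply, if_neg h1]
          by_cases h2 : j' ∈ js <;> simp [h1, h2]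
      rw [harg]
    by_cases hs : s = w j
    · rw [wAux, if_pos hs, List.nil_append, hs]
      exact key o
    · rw [wAux, if_neg hs]
      simp only [List.singleton_append]
      simp only [applyInstrs, instr_si]
      have hb : (if (false:Bool) then false else !s) = w j := by
        cases s <;> cases hw : w j <;> simp_all
      rw [hb]
      exact key o

def writesF (w : Fin n → Bool) : List (Fin (2*n+3)) := wAux w (List.finRange n) false

lemma writesF_apply (w : Fin n → Bool) (o c : Fin n → Bool) (z : Bool) :
    applyInstrs (fB n) (writesF w) (mkState o c false false z)
      = mkState (if (∀ k, c k = false) then w else o) c false false z := by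
  rw [writesF, wAux_apply]
  congr 1
  funext j
  by_cases hc : (∀ k, c k = false) <;> simp [hc]

def transProg (ds : List (Fin n)) : List (Fin (2*n+3)) :=
  if ds.isEmpty then [] else si :: (ds.map ci ++ [si])

lemma trans_apply (ds : List (Fin n)) (hnd : ds.Nodup) (o c : Fin n → Bool) (z : Bool) :
    applyInstrs (fB n) (transProg ds) (mkState o c false false z)
      = mkState o (fun k => if k ∈ ds then !(c k) else c k) false false z := by
  by_cases he : ds.isEmpty
  · rw [transProg, if_pos he]
    have : ds = [] := List.isEmpty_iff.1 he
    subst this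
    have h : (fun k => if k ∈ ([] : List (Fin n)) then !(c k) else c k) = c := by
      funext k; simp
    simp [applyInstrs, h]
  · rw [transProg, if_neg he]
    simp only [applyInstrs, instr_si]
    rw [show (if (false:Bool) then false else !(false:Bool)) = true by simp]
    rw [applyInstrs_append, toggle_apply ds hnd]
    simp only [applyInstrs, instr_si]
    rw [show (if (false:Bool) then false else !(true:Bool)) = false by simp]

def diffL (v v' : Fin n → Bool) : List (Fin n) :=
  (List.finRange n).filter (fun k => v k != v' k)

lemma diffL_nodup (v v' : Fin n → Bool) : (diffL v v').Nodup :=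
  (List.nodup_finRange n).filter _

lemma mem_diffL {v v' : Fin n → Bool} {k : Fin n} : k ∈ diffL v v' ↔ v k ≠ v' k := by
  simp [diffL, List.mem_filter]

def xorf (u v : Fin n → Bool) : Fin n → Bool := fun k => xor (u k) (v k)

lemma xorf_zero (u : Fin n → Bool) : xorf u (fun _ => false) = u := by
  funext k; simp [xorf]

lemma toggle_xorf (u v v' : Fin n → Bool) :
    (fun k => if k ∈ diffL v v' then !(xorf u v k) else xorf u v k) = xorf u v' := by
  funext k
  by_cases h : v k = v' k
  · rw [if_neg (by simp [mem_diffL, h])]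
    simp [xorf, h]
  · rw [if_pos (mem_diffL.2 h)]
    cases hu : u k <;> cases hv : v k <;> cases hv' : v' k <;> simp_all [xorf]

lemma cz_iff (u v : Fin n → Bool) : (∀ k, xorf u v k = false) ↔ u = v := by
  constructor
  · intro h
    funext k
    have := h k
    cases hu : u k <;> cases hv : v k <;> simp_all [xorf]
  · intro h k
    subst h
    simp [xorf]

def sweepAux (g : (Fin n → Bool) → Fin n → Bool) :
    (Fin n → Bool) → List (Fin n → Bool) → List (Fin (2*n+3))
  | v, [] => transProg (diffL v (fun _ => false))
  | v, v' :: vs => transProg (diffL v v') ++ (writesF (g v') ++ sweepAux g v' vs)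

lemma sweep_apply (g : (Fin n → Bool) → Fin n → Bool) (vs : List (Fin n → Bool)) :
    ∀ (v o u : Fin n → Bool) (z : Bool),
    applyInstrs (fB n) (sweepAux g v vs) (mkState o (xorf u v) false false z)
      = mkState (if u ∈ vs then g u else o) u false false z := by
  induction vs with
  | nil =>
    intro v o u z
    rw [sweepAux, trans_apply _ (diffL_nodup _ _), toggle_xorf, xorf_zero]
    simp
  | cons v' vs ih =>
    intro v o u z
    rw [sweepAux, applyInstrs_append, applyInstrs_append,
      trans_apply _ (diffL_nodup _ _), toggle_xorf, writesF_apply]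
    have hcz : (if (∀ k, xorf u v' k = false) then g v' else o) = (if u = v' then g v' else o) := by
      by_cases h : u = v'
      · rw [if_pos ((cz_iff u v').2 h), if_pos h]
      · rw [if_neg (fun hh => h ((cz_iff u v').1 hh)), if_neg h]
    rw [hcz, ih]
    by_cases h1 : u ∈ vs
    · simp [h1]
    · by_cases h2 : u = v'
      · subst h2
        simp [h1]
      · simp [h1, h2]

noncomputable def univL : List (Fin n → Bool) := (Finset.univ : Finset (Fin n → Bool)).toList

lemma mem_univL (u : Fin n → Bool) : u ∈ univL := by
  simp [univL]

lemma univL_length : (univL : List (Fin n → Bool)).length = 2 ^ n := by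
  rw [univL, Finset.length_toList, Finset.card_univ]
  simp

noncomputable def progStep (g : (Fin n → Bool) → Fin n → Bool) : List (Fin (2*n+3)) :=
  mi :: sweepAux g (fun _ => false) univL

lemma step_apply (g : (Fin n → Bool) → Fin n → Bool) (o u : Fin n → Bool) (z : Bool) :
    applyInstrs (fB n) (progStep g) (mkState o u false false z)
      = mkState (g u) u false false z := by
  rw [progStep]
  simp only [applyInstrs, instr_mi]
  have h0 : mkState o u false false z = mkState o (xorf u (fun _ => false)) false false z := by
    rw [xorf_zero]
  rw [h0, sweep_apply]
  rw [if_pos (mem_univL u)]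

noncomputable def progStart (g : (Fin n → Bool) → Fin n → Bool) : List (Fin (2*n+3)) :=
  (normProg ++ (List.finRange n).map ci) ++ sweepAux g (fun _ => false) univL

lemma start_apply (g : (Fin n → Bool) → Fin n → Bool) (o c : Fin n → Bool) (s mm z : Bool) :
    applyInstrs (fB n) (progStart g) (mkState o c s mm z)
      = mkState (g o) o false false z := by
  rw [progStart, applyInstrs_append, applyInstrs_append, norm_apply, copy_apply]
  have h : (fun k => if k ∈ List.finRange n then o k else c k) = o := by
    funext k; simp
  rw [h]
  have h0 : mkState o o false false z = mkState o (xorf o (fun _ => false)) false false z := by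
    rw [xorf_zero]
  rw [h0, sweep_apply]
  rw [if_pos (mem_univL o)]

lemma start_apply' (g : (Fin n → Bool) → Fin n → Bool) (x : Fin (2*n+3) → Bool) :
    applyInstrs (fB n) (progStart g) x
      = mkState (g (fun j => x (oi j))) (fun j => x (oi j)) false false (x zi) := by
  conv_lhs => rw [state_eq_mkState x]
  rw [start_apply]


/-! ### Length bounds -/

lemma wAux_len (w : Fin n → Bool) : ∀ (js : List (Fin n)) (s : Bool),
    (wAux w js s).length ≤ 2 * js.length + 1 := by
  intro js
  induction js with
  | nil => intro s; cases s <;> simp [wAux]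
  | cons j js ih =>
    intro s
    have := ih (w j)
    by_cases hs : s = w j <;> simp [wAux, hs, List.length_append] <;> omega

lemma writesF_len (w : Fin n → Bool) : (writesF w).length ≤ 2 * n + 1 := by
  have := wAux_len w (List.finRange n) false
  simpa [writesF] using this

lemma diffL_len (v v' : Fin n → Bool) : (diffL v v').length ≤ n := by
  have h := List.length_filter_le (fun k => v k != v' k) (List.finRange n)
  simpa [diffL] using h

lemma transProg_len (ds : List (Fin n)) : (transProg ds).length ≤ ds.length + 2 := by
  by_cases he : ds.isEmpty <;> simp [transProg, he] <;> omega

lemma sweep_len (g : (Fin n → Bool) → Fin n → Bool) :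
    ∀ (vs : List (Fin n → Bool)) (v : Fin n → Bool),
    (sweepAux g v vs).length ≤ (3 * n + 3) * vs.length + (n + 2) := by
  intro vs
  induction vs with
  | nil =>
    intro v
    have h1 := transProg_len (diffL v (fun _ => false))
    have h2 := diffL_len v (fun _ => false)
    simp only [sweepAux]
    omega
  | cons v' vs ih =>
    intro v
    have h1 := transProg_len (diffL v v')
    have h2 := diffL_len v v'
    have h3 := writesF_len (g v')
    have h4 := ih v'
    simp only [sweepAux, List.length_append]
    have : (3 * n + 3) * (v' :: vs).length = (3 * n + 3) * vs.length + (3 * n + 3) := by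
      simp [List.length_cons]; ring
    omega

lemma two_pow_ge (k : ℕ) : k + 1 ≤ 2 ^ k := by have := @Nat.lt_two_pow_self k; omega

lemma progStep_len (g : (Fin n → Bool) → Fin n → Bool) :
    (progStep g).length ≤ (3 * n + 16) * 2 ^ n := by
  have h1 := sweep_len g univL (fun _ => false)
  rw [univL_length] at h1
  have h2 : n + 1 ≤ 2 ^ n := two_pow_ge n
  have h3 : (progStep g).length = 1 + (sweepAux g (fun _ => false) univL).length := by
    simp [progStep]; omega
  have : (3 * n + 3) * 2 ^ n + 13 * 2 ^ n = (3 * n + 16) * 2 ^ n := by ring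
  nlinarith

lemma progStart_len (g : (Fin n → Bool) → Fin n → Bool) :
    (progStart g).length ≤ (3 * n + 16) * 2 ^ n := by
  have h1 := sweep_len g univL (fun _ => false)
  rw [univL_length] at h1
  have h2 : n + 1 ≤ 2 ^ n := two_pow_ge n
  have h3 : (progStart g).length = (4 + n) + (sweepAux g (fun _ => false) univL).length := by
    simp [progStart, normProg]; omega
  nlinarith


/-! ### The witness list -/

noncomputable def hsOf : List ((Fin n → Bool) → Fin n → Bool) → List (List (Fin (2*n+3)))
  | [] => []
  | g :: rest => progStart g :: rest.map progStep

lemma hsOf_length (gs : List ((Fin n → Bool) → Fin n → Bool)) :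
    (hsOf gs).length = gs.length := by
  cases gs <;> simp [hsOf]

lemma hsOf_ne_nil (gs : List ((Fin n → Bool) → Fin n → Bool)) :
    ∀ l ∈ hsOf gs, l ≠ [] := by
  cases gs with
  | nil => simp [hsOf]
  | cons g rest =>
    intro l hl
    simp only [hsOf, List.mem_cons, List.mem_map] at hl
    rcases hl with h | ⟨a, _, h⟩
    · subst h; simp [progStart, normProg]
    · rw [← h]; simp [progStep]

lemma hsOf_each_len (gs : List ((Fin n → Bool) → Fin n → Bool)) :
    ∀ l ∈ hsOf gs, l.length ≤ (3*n+16) * 2^n := by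
  cases gs with
  | nil => simp [hsOf]
  | cons g rest =>
    intro l hl
    simp only [hsOf, List.mem_cons, List.mem_map] at hl
    rcases hl with h | ⟨a, _, h⟩
    · subst h; exact progStart_len g
    · rw [← h]; exact progStep_len a

lemma hsOf_flatten_len (gs : List ((Fin n → Bool) → Fin n → Bool)) :
    (hsOf gs).flatten.length ≤ gs.length * ((3*n+16) * 2^n) := by
  have h1 : (hsOf gs).flatten.length = ((hsOf gs).map List.length).sum :=
    List.length_flatten
  have hb : ∀ x ∈ (hsOf gs).map List.length, x ≤ (3*n+16) * 2^n := by
    intro x hx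
    rcases List.mem_map.1 hx with ⟨l, hl, rfl⟩
    exact hsOf_each_len gs l hl
  have h2 := List.sum_le_card_nsmul ((hsOf gs).map List.length) ((3*n+16) * 2^n) hb
  rw [h1]
  calc ((hsOf gs).map List.length).sum
      ≤ ((hsOf gs).map List.length).length • ((3*n+16) * 2^n) := h2
    _ = gs.length * ((3*n+16) * 2^n) := by
        rw [List.length_map, hsOf_length, smul_eq_mul]

lemma sim_prefix (g : (Fin n → Bool) → Fin n → Bool)
    (rest : List ((Fin n → Bool) → Fin n → Bool)) :
    ∀ (i : ℕ) (hi : i < (g :: rest).length) (x : Fin (2*n+3) → Bool),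
    applyInstrs (fB n) (((hsOf (g :: rest)).take (i+1)).flatten) x
      = mkState ((g :: rest).get ⟨i, hi⟩ (fun j => x (oi j)))
          (fun j => x (oi j)) false false (x zi) := by
  intro i
  induction i with
  | zero =>
    intro hi x
    have ht : (hsOf (g :: rest)).take 1 = [progStart g] := by
      simp [hsOf]
    rw [ht]
    have hf : ([progStart g] : List (List (Fin (2*n+3)))).flatten = progStart g := by simp
    rw [hf, start_apply']
    rfl
  | succ i ih =>
    intro hi x
    have hi' : i < (g :: rest).length := Nat.lt_of_succ_lt hi
    have hir : i < rest.length := by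
      simp only [List.length_cons] at hi; omega
    have hlen : i + 1 < (hsOf (g :: rest)).length := by
      rw [hsOf_length]; exact hi
    rw [List.take_succ, List.getElem?_eq_getElem hlen]
    simp only [Option.toList_some]
    rw [List.flatten_append, applyInstrs_append, ih hi']
    have hfa : ([(hsOf (g :: rest))[i+1]] : List (List (Fin (2*n+3)))).flatten
        = (hsOf (g :: rest))[i+1] := by simp
    rw [hfa]
    have hel : (hsOf (g :: rest))[i+1] = progStep (rest.get ⟨i, hir⟩) := by
      simp [hsOf]
    rw [hel, step_apply]
    have hgi : (g :: rest).get ⟨i+1, hi⟩ = rest.get ⟨i, hir⟩ := rfl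
    rw [hgi]

lemma mkState_pr (hmn : n ≤ 2*n+3) (o c : Fin n → Bool) (s mm z : Bool) :
    pr hmn (mkState o c s mm z) = o := by
  funext j
  have h : Fin.castLE hmn j = oi j := by ext; simp [oi]
  show mkState o c s mm z (Fin.castLE hmn j) = o j
  rw [h, mkState_oi]

lemma pr_eq (hmn : n ≤ 2*n+3) (x : Fin (2*n+3) → Bool) :
    pr hmn x = fun j => x (oi j) := by
  funext j
  show x (Fin.castLE hmn j) = x (oi j)
  first
  | (congr 1; ext; simp [oi])
  | (congr 1; ext)
  | congr 1

theorem bool_witness (hmn : n ≤ 2*n+3) (gs : List ((Fin n → Bool) → Fin n → Bool)) :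
    SeqWitness hmn (fB n) gs (hsOf gs) := by
  refine ⟨hsOf_length gs, hsOf_ne_nil gs, ?_⟩
  intro i hi x
  cases gs with
  | nil => exact absurd hi (by simp)
  | cons g rest =>
    rw [sim_prefix g rest i hi x, mkState_pr hmn, pr_eq hmn]


/-! ### Transport along `A ≃ Bool` -/

section Conj

variable {A : Type} (e : A ≃ Bool)

noncomputable def conjF (n : ℕ) : (Fin (2*n+3) → A) → Fin (2*n+3) → A :=
  fun x i => e.symm (fB n (fun t => e (x t)) i)

lemma conj_instr (i : Fin (2*n+3)) (x : Fin (2*n+3) → A) :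
    (fun t => e (instr (conjF e n) i x t)) = instr (fB n) i (fun t => e (x t)) := by
  funext t
  show e (Function.update x i (conjF e n x i) t)
      = Function.update (fun t => e (x t)) i (fB n (fun t => e (x t)) i) t
  rw [Function.update_apply, Function.update_apply, apply_ite e]
  simp [conjF]

lemma conj_apply (l : List (Fin (2*n+3))) :
    ∀ x : Fin (2*n+3) → A,
    (fun t => e (applyInstrs (conjF e n) l x t)) = applyInstrs (fB n) l (fun t => e (x t)) := by
  induction l with
  | nil => intro x; rfl
  | cons i l ih =>
    intro x
    show (fun t => e (applyInstrs (conjF e n) l (instr (conjF e n) i x) t)) = _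
    rw [ih, conj_instr]
    rfl

noncomputable def Fg (g : (Fin n → A) → Fin n → A) : (Fin n → Bool) → Fin n → Bool :=
  fun y j => e (g (fun t => e.symm (y t)) j)

theorem conj_witness (hmn : n ≤ 2*n+3) (gs : List ((Fin n → A) → Fin n → A)) :
    SeqWitness hmn (conjF e n) gs (hsOf (gs.map (Fg e))) := by
  refine ⟨by rw [hsOf_length, List.length_map], hsOf_ne_nil _, ?_⟩
  intro i hi x
  have hiB : i < (gs.map (Fg e)).length := by simpa using hi
  have hB := (bool_witness hmn (gs.map (Fg e))).2.2 i hiB (fun t => e (x t))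
  set L := ((hsOf (gs.map (Fg e))).take (i+1)).flatten with hL
  funext j
  have hc := congrFun (conj_apply e L x) (Fin.castLE hmn j)
  show gs.get ⟨i, hi⟩ (pr hmn x) j = applyInstrs (conjF e n) L x (Fin.castLE hmn j)
  have h2 : applyInstrs (conjF e n) L x (Fin.castLE hmn j)
      = e.symm (applyInstrs (fB n) L (fun t => e (x t)) (Fin.castLE hmn j)) := by
    rw [← hc]; simp
  rw [h2]
  have hB' := congrFun hB j
  have h3 : applyInstrs (fB n) L (fun t => e (x t)) (Fin.castLE hmn j)
      = pr hmn (applyInstrs (fB n) L (fun t => e (x t))) j := rfl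
  rw [h3, ← hB']
  have hg : (gs.map (Fg e)).get ⟨i, hiB⟩ = Fg e (gs.get ⟨i, hi⟩) := by
    simp [List.get_eq_getElem, List.getElem_map]
  rw [hg]
  show gs.get ⟨i, hi⟩ (pr hmn x) j
      = e.symm (e (gs.get ⟨i, hi⟩ (fun t => e.symm (pr hmn (fun t' => e (x t')) t)) j))
  rw [Equiv.symm_apply_apply]
  have harg : (fun t => e.symm (pr hmn (fun t' => e (x t')) t)) = pr hmn x := by
    funext t
    show e.symm (e (x (Fin.castLE hmn t))) = x (Fin.castLE hmn t)
    simp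
  rw [harg]

end Conj

end BU

/-- There is `C > 0` such that for every `n ≥ 2` and finite `A` with `|A| = 2`, there is
a complete `n`-universal transformation of size `2n + 3` whose maximal sequential time
is at most `3n·2^(n·2^n + n) + C·2^(n·2^n + n)`. -/
theorem complete_universal_size_2n_plus_3_binary :
    ∃ C : ℕ, 0 < C ∧
      ∀ (n : ℕ), 2 ≤ n → ∀ (A : Type) [Fintype A], Fintype.card A = 2 →
        ∃ f : (Fin (2 * n + 3) → A) → Fin (2 * n + 3) → A,
          -- f is complete n-universal
          (∀ gs : List ((Fin n → A) → Fin n → A),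
            ∃ hs, SeqWitness (by omega : n ≤ 2 * n + 3) f gs hs) ∧
          -- and its maximal sequential time satisfies the bound
          (∀ gs : List ((Fin n → A) → Fin n → A), gs.Nodup → (∀ g, g ∈ gs) →
            ∃ hs, SeqWitness (by omega : n ≤ 2 * n + 3) f gs hs ∧
              hs.flatten.length ≤
                3 * n * 2 ^ (n * 2 ^ n + n) + C * 2 ^ (n * 2 ^ n + n)) := by
  
  classical
  refine ⟨16, by norm_num, ?_⟩
  intro n hn A _ hA
  have e : A ≃ Bool := Fintype.equivOfCardEq (by rw [hA, Fintype.card_bool])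
  refine ⟨BU.conjF e n, ?_, ?_⟩
  · intro gs
    exact ⟨BU.hsOf (gs.map (BU.Fg e)), BU.conj_witness e _ gs⟩
  · intro gs hnd _
    refine ⟨BU.hsOf (gs.map (BU.Fg e)), BU.conj_witness e _ gs, ?_⟩
    letI : DecidableEq A := Classical.decEq A
    have hcard : gs.length ≤ Fintype.card ((Fin n → A) → Fin n → A) :=
      hnd.length_le_card
    have hcard2 : Fintype.card ((Fin n → A) → Fin n → A) = 2 ^ (n * 2 ^ n) := by
      rw [Fintype.card_fun, Fintype.card_fun, hA, Fintype.card_fin, ← pow_mul]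
    have h1 := BU.hsOf_flatten_len (gs.map (BU.Fg e))
    rw [List.length_map] at h1
    calc (BU.hsOf (gs.map (BU.Fg e))).flatten.length
        ≤ gs.length * ((3 * n + 16) * 2 ^ n) := h1
      _ ≤ 2 ^ (n * 2 ^ n) * ((3 * n + 16) * 2 ^ n) := by
          apply Nat.mul_le_mul_right
          rw [← hcard2]
          exact hcard
      _ = 3 * n * 2 ^ (n * 2 ^ n + n) + 16 * 2 ^ (n * 2 ^ n + n) := by
          rw [pow_add]; ring
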